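/- Define Δ(φ) = m r² − J sin²(φ) with constants m r² > J > 0. Then the pair of functions f_θ(φ) = 1/√(2 Δ(φ)) and f_ψ(φ) = −sin(φ)/√(2 Δ(φ)) solves the linear ODE system f_θ' = (J sin φ cos φ / Δ) f_θ and f_ψ' = −(m r² cos φ / Δ) f_θ on the interval (−π/2, π/2). -/

import Mathlib

/-- With `Δ(φ) = m r² - J sin² φ` and `m r² > J > 0`, the functions
`f_θ = 1/√(2Δ)` and `f_ψ = -sin φ/√(2Δ)` solve the snakeboard momentum
equations `f_θ' = (J sin φ cos φ/Δ) f_θ` and `f_ψ' = -(m r² cos φ/Δ) f_θ`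
on `(-π/2, π/2)`. -/
theorem stmt6 (m r J : ℝ) (hm : 0 < m) (hr : 0 < r) (hJ : 0 < J)
    (hmrJ : J < m * r ^ 2) :
    ∀ φ ∈ Set.Ioo (-(Real.pi / 2)) (Real.pi / 2),
      HasDerivAt (fun φ => 1 / Real.sqrt (2 * (m * r ^ 2 - J * Real.sin φ ^ 2)))
        (J * Real.sin φ * Real.cos φ / (m * r ^ 2 - J * Real.sin φ ^ 2) *
          (1 / Real.sqrt (2 * (m * r ^ 2 - J * Real.sin φ ^ 2)))) φ ∧
      HasDerivAt (fun φ => -Real.sin φ / Real.sqrt (2 * (m * r ^ 2 - J * Real.sin φ ^ 2)))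
        (-(m * r ^ 2 * Real.cos φ / (m * r ^ 2 - J * Real.sin φ ^ 2)) *
          (1 / Real.sqrt (2 * (m * r ^ 2 - J * Real.sin φ ^ 2)))) φ := by
  intro φ _
  have hΔ : 0 < m * r ^ 2 - J * Real.sin φ ^ 2 := by
    nlinarith [Real.sin_sq_le_one φ, hJ]
  have h2Δ : 0 < 2 * (m * r ^ 2 - J * Real.sin φ ^ 2) := by linarith
  have hG : 0 < Real.sqrt (2 * (m * r ^ 2 - J * Real.sin φ ^ 2)) := Real.sqrt_pos.2 h2Δ
  set G := Real.sqrt (2 * (m * r ^ 2 - J * Real.sin φ ^ 2)) with hGdef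
  have hG2 : G ^ 2 = 2 * (m * r ^ 2 - J * Real.sin φ ^ 2) := Real.sq_sqrt h2Δ.le
  clear_value G
  have hinner : HasDerivAt (fun φ => 2 * (m * r ^ 2 - J * Real.sin φ ^ 2))
      (-(4 * J * Real.sin φ * Real.cos φ)) φ := by
    have := ((((Real.hasDerivAt_sin φ).pow 2).const_mul J).const_sub (m * r ^ 2)).const_mul 2
    refine HasDerivAt.congr_deriv this (Eq.symm ?_)
    ring
  have hsqrt : HasDerivAt (fun φ => Real.sqrt (2 * (m * r ^ 2 - J * Real.sin φ ^ 2)))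
      (-(4 * J * Real.sin φ * Real.cos φ) / (2 * G)) φ := by
    have := (Real.hasDerivAt_sqrt h2Δ.ne').comp φ hinner
    rw [← hGdef] at this
    refine HasDerivAt.congr_deriv this (Eq.symm ?_)
    field_simp
  constructor
  · have h1 := (hasDerivAt_const φ (1 : ℝ)).div hsqrt (hGdef ▸ hG).ne'
    rw [← hGdef] at h1
    refine HasDerivAt.congr_deriv h1 (Eq.symm ?_)
    field_simp
    linear_combination (2 * J * Real.sin φ * Real.cos φ) * hG2
  · have h2 := ((Real.hasDerivAt_sin φ).neg).div hsqrt (hGdef ▸ hG).ne'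
    rw [← hGdef] at h2
    refine HasDerivAt.congr_deriv h2 (Eq.symm ?_)
    have hcos := Real.sin_sq_add_cos_sq φ
    simp only [Pi.neg_apply]
    field_simp
    linear_combination (-(2 * Real.cos φ * J * Real.sin φ ^ 2)) * hG2
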